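/- Unisolvence kernel lemma on the reference tetrahedron: let K̂ = {x ∈ ℝ³ : x₁ ≥ 0, x₂ ≥ 0, x₃ ≥ 0, x₁ + x₂ + x₃ ≤ 1} and let φ₁, φ₂, φ₃ : ℝ³ → ℝ be polynomial functions. If ∫_{K̂} ( x₁ φ₁(x)² + x₂ φ₂(x)² + x₃ φ₃(x)² ) dx = 0, then φ₁ = φ₂ = φ₃ = 0 identically on ℝ³. -/

import Mathlib

open MeasureTheory

/-- Divergence of a vector field on ℝ³. -/
noncomputable def pdiv (v : (Fin 3 → ℝ) → (Fin 3 → ℝ)) (x : Fin 3 → ℝ) : ℝ :=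
  ∑ i : Fin 3, fderiv ℝ (fun y => v y i) x (Pi.single i 1)

/-- Curl of a vector field on ℝ³. -/
noncomputable def pcurl (v : (Fin 3 → ℝ) → (Fin 3 → ℝ)) (x : Fin 3 → ℝ) : Fin 3 → ℝ :=
  ![fderiv ℝ (fun y => v y 2) x (Pi.single 1 1) - fderiv ℝ (fun y => v y 1) x (Pi.single 2 1),
    fderiv ℝ (fun y => v y 0) x (Pi.single 2 1) - fderiv ℝ (fun y => v y 2) x (Pi.single 0 1),
    fderiv ℝ (fun y => v y 1) x (Pi.single 0 1) - fderiv ℝ (fun y => v y 0) x (Pi.single 1 1)]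

/-- Gradient of a scalar field on ℝ³. -/
noncomputable def pgrad (p : (Fin 3 → ℝ) → ℝ) (x : Fin 3 → ℝ) : Fin 3 → ℝ :=
  fun i => fderiv ℝ p x (Pi.single i 1)

/-- The Poincaré-type operator 𝔭: (𝔭u)(x) = (∫₀¹ t² u(tx) dt) x. -/
noncomputable def poin (u : (Fin 3 → ℝ) → ℝ) (x : Fin 3 → ℝ) : Fin 3 → ℝ :=
  (∫ t in (0:ℝ)..1, t ^ 2 * u (t • x)) • x

/-- `u` is a polynomial function of total degree at most `r` (P_r = {0} if r < 0). -/
def IsPolyDeg (r : ℤ) (u : (Fin 3 → ℝ) → ℝ) : Prop :=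
  ∃ p : MvPolynomial (Fin 3) ℝ, (p = 0 ∨ (p.totalDegree : ℤ) ≤ r) ∧
    ∀ x, MvPolynomial.eval x p = u x

/-- `v` is a vector field with polynomial components of total degree at most `r`. -/
def IsVecPolyDeg (r : ℤ) (v : (Fin 3 → ℝ) → (Fin 3 → ℝ)) : Prop :=
  ∀ i, IsPolyDeg r fun x => v x i

/-- `u` is a polynomial function. -/
def IsPolyFun (u : (Fin 3 → ℝ) → ℝ) : Prop :=
  ∃ p : MvPolynomial (Fin 3) ℝ, ∀ x, MvPolynomial.eval x p = u x

/-- Membership in S_k = {p ∈ (P̃_k)³ : x·p(x) = 0}. -/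
def MemS (k : ℕ) (v : (Fin 3 → ℝ) → (Fin 3 → ℝ)) : Prop :=
  (∀ i, ∃ p : MvPolynomial (Fin 3) ℝ, p.IsHomogeneous k ∧ ∀ x, MvPolynomial.eval x p = v x i) ∧
    ∀ x, ∑ i : Fin 3, x i * v x i = 0

/-- Membership in the first-family Nédélec space R_k = 𝐏_{k-1} ⊕ S_k. -/
def MemR (k : ℕ) (v : (Fin 3 → ℝ) → (Fin 3 → ℝ)) : Prop :=
  ∃ v₁ v₂, IsVecPolyDeg ((k : ℤ) - 1) v₁ ∧ MemS k v₂ ∧ v = v₁ + v₂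

section Aux

open Set Filter

private lemma aux_analytic (u : (Fin 3 → ℝ) → ℝ) (hu : IsPolyFun u) :
    AnalyticOnNhd ℝ u Set.univ := by
  obtain ⟨p, hp⟩ := hu
  have h := AnalyticOnNhd.eval_continuousLinearMap
    (ContinuousLinearMap.id ℝ (Fin 3 → ℝ)) p
  have he : (fun x : Fin 3 → ℝ => MvPolynomial.eval x p) = u := funext hp
  simpa [he] using h

private lemma aux_zero_of_eqOn_open {u : (Fin 3 → ℝ) → ℝ} (hu : IsPolyFun u)
    {U : Set (Fin 3 → ℝ)} (hU : IsOpen U) {z₀ : Fin 3 → ℝ} (hz₀ : z₀ ∈ U)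
    (hvan : Set.EqOn u 0 U) : ∀ x, u x = 0 := by
  intro x
  have hana := aux_analytic u hu
  have hz : u =ᶠ[nhds z₀] 0 := Filter.eventuallyEq_of_mem (hU.mem_nhds hz₀) hvan
  have := hana.eqOn_zero_of_preconnected_of_eventuallyEq_zero
    isPreconnected_univ (Set.mem_univ z₀) hz
  exact this (Set.mem_univ x)

end Aux

/-- unisolvence kernel lemma on the reference tetrahedron. -/
theorem stmt_16 (φ : Fin 3 → (Fin 3 → ℝ) → ℝ) (hφ : ∀ i, IsPolyFun (φ i))
    (h : ∫ x in {x : Fin 3 → ℝ | 0 ≤ x 0 ∧ 0 ≤ x 1 ∧ 0 ≤ x 2 ∧ x 0 + x 1 + x 2 ≤ 1},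
        (x 0 * (φ 0 x) ^ 2 + x 1 * (φ 1 x) ^ 2 + x 2 * (φ 2 x) ^ 2) = 0) :
    ∀ i, ∀ x, φ i x = 0 := by
  classical
  set S : Set (Fin 3 → ℝ) :=
    {x : Fin 3 → ℝ | 0 ≤ x 0 ∧ 0 ≤ x 1 ∧ 0 ≤ x 2 ∧ x 0 + x 1 + x 2 ≤ 1} with hS
  set U : Set (Fin 3 → ℝ) :=
    {x : Fin 3 → ℝ | 0 < x 0 ∧ 0 < x 1 ∧ 0 < x 2 ∧ x 0 + x 1 + x 2 < 1} with hUdef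
  set f : (Fin 3 → ℝ) → ℝ :=
    fun x => x 0 * (φ 0 x) ^ 2 + x 1 * (φ 1 x) ^ 2 + x 2 * (φ 2 x) ^ 2 with hfdef
  -- continuity of the φ's and of f
  have hcont : ∀ i, Continuous (φ i) := fun i => by
    have := aux_analytic (φ i) (hφ i)
    exact continuousOn_univ.1 this.continuousOn
  have hfcont : Continuous f := by
    apply Continuous.add
    apply Continuous.add
    · exact (continuous_apply 0).mul ((hcont 0).pow 2)
    · exact (continuous_apply 1).mul ((hcont 1).pow 2)
    · exact (continuous_apply 2).mul ((hcont 2).pow 2)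
  -- S is compact
  have hSclosed : IsClosed S := by
    have : S = {x : Fin 3 → ℝ | 0 ≤ x 0} ∩ ({x | 0 ≤ x 1} ∩ ({x | 0 ≤ x 2} ∩
        {x | x 0 + x 1 + x 2 ≤ 1})) := rfl
    rw [this]
    exact (isClosed_le continuous_const (continuous_apply 0)).inter
      ((isClosed_le continuous_const (continuous_apply 1)).inter
      ((isClosed_le continuous_const (continuous_apply 2)).inter
      (isClosed_le (((continuous_apply 0).add (continuous_apply 1)).add
        (continuous_apply 2)) continuous_const)))
  have hSsub : S ⊆ Set.Icc (0 : Fin 3 → ℝ) 1 := by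
    rintro x ⟨h0, h1, h2, hs⟩
    constructor
    · intro i; fin_cases i <;> assumption
    · intro i
      fin_cases i
      · show x 0 ≤ 1; linarith
      · show x 1 ≤ 1; linarith
      · show x 2 ≤ 1; linarith
  have hScompact : IsCompact S := isCompact_Icc.of_isClosed_subset hSclosed hSsub
  have hSmeas : MeasurableSet S := hSclosed.measurableSet
  -- integrability and a.e. vanishing
  have hint : MeasureTheory.IntegrableOn f S :=
    hfcont.continuousOn.integrableOn_compact hScompact
  have hnonneg : (0 : (Fin 3 → ℝ) → ℝ) ≤ᵐ[MeasureTheory.volume.restrict S] f := by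
    refine MeasureTheory.ae_restrict_of_forall_mem hSmeas fun x hx => ?_
    obtain ⟨h0, h1, h2, _⟩ := hx
    have := sq_nonneg (φ 0 x); have := sq_nonneg (φ 1 x); have := sq_nonneg (φ 2 x)
    simp only [hfdef]
    positivity
  have haeS : f =ᵐ[MeasureTheory.volume.restrict S] 0 :=
    (MeasureTheory.integral_eq_zero_iff_of_nonneg_ae hnonneg hint).mp h
  -- U is open, U ⊆ S
  have hUopen : IsOpen U := by
    have : U = {x : Fin 3 → ℝ | 0 < x 0} ∩ ({x | 0 < x 1} ∩ ({x | 0 < x 2} ∩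
        {x | x 0 + x 1 + x 2 < 1})) := rfl
    rw [this]
    exact (isOpen_lt continuous_const (continuous_apply 0)).inter
      ((isOpen_lt continuous_const (continuous_apply 1)).inter
      ((isOpen_lt continuous_const (continuous_apply 2)).inter
      (isOpen_lt (((continuous_apply 0).add (continuous_apply 1)).add
        (continuous_apply 2)) continuous_const)))
  have hUS : U ⊆ S := by
    rintro x ⟨h0, h1, h2, hs⟩
    exact ⟨le_of_lt h0, le_of_lt h1, le_of_lt h2, le_of_lt hs⟩
  have haeU : f =ᵐ[MeasureTheory.volume.restrict U] 0 :=
    MeasureTheory.ae_restrict_of_ae_restrict_of_subset hUS haeS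
  -- f vanishes on U
  have hfU : Set.EqOn f 0 U := by
    intro x hxU
    by_contra hne
    have hVopen : IsOpen (U ∩ {y | f y ≠ 0}) :=
      hUopen.inter (isOpen_ne_fun hfcont continuous_const)
    have hVpos : 0 < MeasureTheory.volume (U ∩ {y | f y ≠ 0}) :=
      hVopen.measure_pos _ ⟨x, hxU, hne⟩
    have hmeas : MeasurableSet {y | f y ≠ 0} :=
      (isOpen_ne_fun hfcont continuous_const).measurableSet
    have h0 : MeasureTheory.volume.restrict U {y | f y ≠ 0} = 0 := by
      have := haeU
      rw [Filter.EventuallyEq, MeasureTheory.ae_iff] at this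
      simpa using this
    rw [MeasureTheory.Measure.restrict_apply hmeas] at h0
    rw [Set.inter_comm] at hVpos
    exact absurd h0 (ne_of_gt hVpos)
  -- each φ i vanishes on U
  have hφU : ∀ i, Set.EqOn (φ i) 0 U := by
    intro i x hxU
    have hfx : f x = 0 := hfU hxU
    obtain ⟨h0, h1, h2, _⟩ := hxU
    have t0 : 0 ≤ x 0 * (φ 0 x) ^ 2 := mul_nonneg (le_of_lt h0) (sq_nonneg _)
    have t1 : 0 ≤ x 1 * (φ 1 x) ^ 2 := mul_nonneg (le_of_lt h1) (sq_nonneg _)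
    have t2 : 0 ≤ x 2 * (φ 2 x) ^ 2 := mul_nonneg (le_of_lt h2) (sq_nonneg _)
    simp only [hfdef] at hfx
    have hsq : (φ i x) ^ 2 = 0 := by
      fin_cases i
      · have : x 0 * (φ 0 x) ^ 2 = 0 := by linarith
        exact (mul_eq_zero.mp this).resolve_left (ne_of_gt h0)
      · have : x 1 * (φ 1 x) ^ 2 = 0 := by linarith
        exact (mul_eq_zero.mp this).resolve_left (ne_of_gt h1)
      · have : x 2 * (φ 2 x) ^ 2 = 0 := by linarith
        exact (mul_eq_zero.mp this).resolve_left (ne_of_gt h2)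
    have := pow_eq_zero_iff (n := 2) (by norm_num) |>.mp hsq
    simpa using this
  -- a point of U and conclusion via analytic continuation
  have hz₀ : (fun _ : Fin 3 => (1:ℝ)/8) ∈ U := by
    refine ⟨by norm_num, by norm_num, by norm_num, by norm_num⟩
  intro i
  exact aux_zero_of_eqOn_open (hφ i) hUopen hz₀ (hφU i)
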